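/- There exists c < ∞ such that for all z ∈ ℤ² ∖ ℤ₊: | L f(z) | ≤ c · |z|^{−7/2}, where f(z) = Im √z = |z|^{1/2} sin(θ_z/2) and L is the discrete Laplacian on ℤ². -/

import Mathlib

open Filter
open scoped Classical

namespace LERW

/-- The lattice `ℤ² = ℤ + iℤ`. -/
abbrev V : Type := ℤ × ℤ

/-- Embedding of the lattice into `ℂ`. -/
noncomputable def toC (z : V) : ℂ := (z.1 : ℂ) + (z.2 : ℂ) * Complex.I

/-- Euclidean norm of a lattice point. -/
noncomputable def nrm (z : V) : ℝ := ‖toC z‖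

/-- Euclidean diameter of a set of lattice points. -/
noncomputable def diamV (K : Set V) : ℝ := Metric.diam (toC '' K)

/-- Lattice adjacency. -/
def adj (z w : V) : Prop := (z.1 - w.1).natAbs + (z.2 - w.2).natAbs = 1

/-- A (nearest-neighbor) walk: a nonempty list of consecutively adjacent points. -/
def IsWalk (ω : List V) : Prop := ω ≠ [] ∧ ω.Chain' adj

def starts (ω : List V) (z : V) : Prop := ω.head? = some z

def ends (ω : List V) (w : V) : Prop := ω.getLast? = some w

/-- The simple random walk weight `4^{-(number of steps)}` of a walk. -/
noncomputable def pweight (ω : List V) : ℝ := (1 / 4 : ℝ) ^ (ω.length - 1)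

/-- The zipper edges `{k, k - i}`, `k ≥ 1`, crossing just below the positive real axis. -/
def zipper (a b : V) : Prop :=
  a.1 = b.1 ∧ 1 ≤ a.1 ∧ ((a.2 = 0 ∧ b.2 = -1) ∨ (a.2 = -1 ∧ b.2 = 0))

/-- The sign `(-1)^{number of zipper crossings}` of a walk. -/
noncomputable def qsign (ω : List V) : ℝ :=
  (-1 : ℝ) ^ ((ω.zip ω.tail).countP fun e => decide (zipper e.1 e.2))

/-- Walks from `z` to `w`, otherwise staying in `A`. -/
def WalkTo (A : Set V) (z w : V) (ω : List V) : Prop :=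
  IsWalk ω ∧ starts ω z ∧ ends ω w ∧ ∀ x ∈ ω.dropLast, x ∈ A

/-- The Poisson kernel `H_A(z,w) = P^z{S_{τ_A} = w}` for `z ∈ A`, `w ∉ A`,
and `1{z = w}` for `z ∉ A`. -/
noncomputable def H (A : Set V) (z w : V) : ℝ :=
  if z ∈ A then ∑' ω : {ω : List V // WalkTo A z w ω}, pweight ω.1
  else if z = w then 1 else 0

/-- The signed (zipper) Poisson kernel
`H^q_A(z,w) = E^z[(-1)^{Q_{τ_A}} 1{S_{τ_A} = w}]` for `z ∈ A`, `w ∉ A`,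
and `1{z = w}` for `z ∉ A`. -/
noncomputable def Hq (A : Set V) (z w : V) : ℝ :=
  if z ∈ A then ∑' ω : {ω : List V // WalkTo A z w ω}, qsign ω.1 * pweight ω.1
  else if z = w then 1 else 0

/-- Walks from `z` to `w` staying in `A`. -/
def WalkIn (A : Set V) (z w : V) (ω : List V) : Prop :=
  IsWalk ω ∧ starts ω z ∧ ends ω w ∧ ∀ x ∈ ω, x ∈ A

/-- The Green's function `G_A(z,w)` of simple random walk in `A`: the expected
number of visits to `w` strictly before `τ_A` by the walk started at `z`. -/
noncomputable def G (A : Set V) (z w : V) : ℝ :=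
  ∑' ω : {ω : List V // WalkIn A z w ω}, pweight ω.1

/-- Walks started at `z`, stopped at the exit time of `B`. -/
def StoppedWalk (B : Set V) (z : V) (ω : List V) : Prop :=
  IsWalk ω ∧ starts ω z ∧ (∀ x ∈ ω.dropLast, x ∈ B) ∧ ∀ w, ends ω w → w ∉ B

noncomputable def lastVal (f : V → ℝ) (ω : List V) : ℝ := (ω.getLast?.map f).getD 0

/-- `E^z[f(S_{τ_B})]`, the expectation of `f` at the exit point of `B`. -/
noncomputable def exitExp (B : Set V) (z : V) (f : V → ℝ) : ℝ :=
  ∑' ω : {ω : List V // StoppedWalk B z ω}, pweight ω.1 * lastVal f ω.1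

/-- `ℤ₊`, the lattice points on the nonnegative real axis. -/
def Zplus : Set V := {z | 0 ≤ z.1 ∧ z.2 = 0}

/-- The discrete disk `D_R`. -/
def ballV (R : ℝ) : Set V := {z | nrm z < R}

/-- The set `D_R ∖ ℤ₊`, whose exit time is `σ_R ∧ τ_+`. -/
def contSet (R : ℝ) : Set V := {z | nrm z < R ∧ z ∉ Zplus}

/-- `P^z{σ_R < τ_+}`. -/
noncomputable def probEscape (z : V) (R : ℝ) : ℝ :=
  exitExp (contSet R) z fun w => if w ∈ Zplus then 0 else 1

/-- The outer boundary `∂A`: the points of `ℤ² ∖ A` adjacent to `A`. -/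
def bdry (A : Set V) : Set V := {w | w ∉ A ∧ ∃ z ∈ A, adj z w}

/-- The discrete circle `C_R = ∂D_R`. -/
def circ (R : ℝ) : Set V := bdry (ballV R)

/-- `θ_z = arg z ∈ [0, 2π)`. -/
noncomputable def theta (z : V) : ℝ :=
  if 0 ≤ (toC z).arg then (toC z).arg else (toC z).arg + 2 * Real.pi

/-- `f(z) = Im √z = |z|^{1/2} sin(θ_z/2)`. -/
noncomputable def fIm (z : V) : ℝ := Real.sqrt (nrm z) * Real.sin (theta z / 2)

/-- `v(z) = lim_{R→∞} R^{1/2} P^z{σ_R < τ_+}` (the limit exists). -/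
noncomputable def v (z : V) : ℝ :=
  limUnder atTop fun R : ℝ => Real.sqrt R * probEscape z R

/-- The four lattice neighbors of a point. -/
def nbrs (z : V) : List V := [(z.1 + 1, z.2), (z.1 - 1, z.2), (z.1, z.2 + 1), (z.1, z.2 - 1)]

/-- The discrete Laplacian `Lg(z) = ¼ ∑_{|w-z|=1} g(w) - g(z)`. -/
noncomputable def Lap (g : V → ℝ) (z : V) : ℝ := (1 / 4 : ℝ) * ((nbrs z).map g).sum - g z

/-- The boundary Poisson kernel `H_{∂A}(x,y) = ¼ ∑_{x' ∈ A, x' ~ x} H_A(x',y)`. -/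
noncomputable def Hbd (A : Set V) (x y : V) : ℝ :=
  (1 / 4 : ℝ) * ((nbrs x).map fun x' => if x' ∈ A then H A x' y else 0).sum

/-- `H_A(z,E) = ∑_{w ∈ E} H_A(z,w)`. -/
noncomputable def HSet (A : Set V) (z : V) (E : Set V) : ℝ := ∑' w : E, H A z w.1

/-- `H_{∂A}(x,E) = ∑_{y ∈ E} H_{∂A}(x,y)`. -/
noncomputable def HbdSet (A : Set V) (x : V) (E : Set V) : ℝ := ∑' w : E, Hbd A x w.1

/-- `U_R`, the square of side `2R` centered at the origin. -/
def squ (R : ℝ) : Set V := {z | |(z.1 : ℝ)| < R ∧ |(z.2 : ℝ)| < R}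

/-- The segment `{0, 1, …, R}` on the nonnegative real axis. -/
def seg (R : ℝ) : Set V := {z | 0 ≤ z.1 ∧ (z.1 : ℝ) ≤ R ∧ z.2 = 0}

/-- The slit square `U_R^- = U_R ∖ {0, 1, …, R}`. -/
def Uminus (R : ℝ) : Set V := squ R \ seg R

/-- Distance from `z` to the set `{R, R+iR, R-iR, -R+iR, -R-iR}`. -/
noncomputable def cornerDist (R : ℝ) (z : V) : ℝ :=
  Metric.infDist (toC z)
    {(R : ℂ), (R : ℂ) + (R : ℂ) * Complex.I, (R : ℂ) - (R : ℂ) * Complex.I,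
      -(R : ℂ) + (R : ℂ) * Complex.I, -(R : ℂ) - (R : ℂ) * Complex.I}

/-- A self-avoiding walk through the origin: pairwise distinct, consecutively
adjacent lattice points, one of which is `0`. -/
def IsSAW0 (η : List V) : Prop := η.Chain' adj ∧ η.Nodup ∧ ((0, 0) : V) ∈ η

/-- The vertex set of a SAW. -/
def sawSet (η : List V) : Set V := {x | x ∈ η}

/-- `v_η(z) = v(z) - ∑_{y ∈ η} H^q_{ℤ²∖η}(z,y) v(y)`. -/
noncomputable def vEta (η : List V) (z : V) : ℝ :=
  v z - ∑ y ∈ η.toFinset, Hq (sawSet η)ᶜ z y * v y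

/-- The discrete harmonic conjugate `u` of `v`. -/
noncomputable def uFn (z : V) : ℝ := if 0 ≤ z.2 then v (-z.1, z.2) else -v (-z.1, z.2)

/-- `u_η(z) = u(z) - ∑_{y ∈ η} H^q_{ℤ²∖η}(z,y) u(y)`. -/
noncomputable def uEta (η : List V) (z : V) : ℝ :=
  uFn z - ∑ y ∈ η.toFinset, Hq (sawSet η)ᶜ z y * uFn y

/-- Complex conjugation on the lattice. -/
def conjV (w : V) : V := (w.1, -w.2)

/-- `h_m^η(z,w) = ½ [H^q_{D_m∖η}(z,w) + H^q_{D_m∖η}(z,w̄)]`. -/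
noncomputable def hEta (η : List V) (m : ℝ) (z w : V) : ℝ :=
  (Hq (ballV m \ sawSet η) z w + Hq (ballV m \ sawSet η) z (conjV w)) / 2

/-- `P^z{S(σ_m ∧ τ_+) = w}`. -/
noncomputable def hitPt (m : ℝ) (z w : V) : ℝ :=
  exitExp (contSet m) z fun x => if x = w then 1 else 0

/-- `μ_m(w) = ½ [P^{-1}{S(σ_m ∧ τ_+) = w} + P^{-1}{S(σ_m ∧ τ_+) = w̄}] / P^{-1}{σ_m < τ_+}`. -/
noncomputable def mu (m : ℝ) (w : V) : ℝ :=
  ((hitPt m (-1, 0) w + hitPt m (-1, 0) (conjV w)) / 2) / probEscape (-1, 0) m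

/-- `P^z{σ_R < τ_+, S(σ_R) = w}`. -/
noncomputable def escHit (z : V) (R : ℝ) (w : V) : ℝ :=
  exitExp (contSet R) z fun x => if x = w ∧ x ∉ Zplus then 1 else 0

/-- The infinite vertical strip `A_n = {x + iy : |x| < n}`. -/
def strip (n : ℝ) : Set V := {z | |(z.1 : ℝ)| < n}

/-- `v_η^{(n)}(z) = H^q_{A_n∖η}(z, -n)`. -/
noncomputable def vEtaN (η : List V) (n : ℕ) (z : V) : ℝ :=
  Hq (strip n \ sawSet η) z (-(n : ℤ), 0)

/-- `u_η^{(n)}(z) = H^q_{A_n∖η}(z, n)`. -/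
noncomputable def uEtaN (η : List V) (n : ℕ) (z : V) : ℝ :=
  Hq (strip n \ sawSet η) z ((n : ℤ), 0)

/-- `P^z{S_0, …, S_{k-1} ∈ B}`: total weight of walks with `k` vertices from `z`
staying in `B`. -/
noncomputable def stayProb (B : Set V) (z : V) (k : ℕ) : ℝ :=
  ∑' ω : {ω : List V // ω.length = k ∧ IsWalk ω ∧ starts ω z ∧ ∀ x ∈ ω, x ∈ B},
    pweight ω.1

/-- `E^z[τ_B] = ∑_{k ≥ 0} P^z{τ_B > k}`, the expected exit time of `B`. -/
noncomputable def expTime (B : Set V) (z : V) : ℝ := ∑' k : ℕ, stayProb B z (k + 1)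



/-! ### Auxiliary material for Statement 11 -/

section Stmt11Aux

open Metric

lemma toC_re' (z : V) : (toC z).re = (z.1 : ℝ) := by simp [toC]
lemma toC_im' (z : V) : (toC z).im = (z.2 : ℝ) := by simp [toC]

lemma nrm_nonneg' (z : V) : 0 ≤ nrm z := norm_nonneg _

lemma toC_eq_zero' {z : V} : toC z = 0 ↔ z = (0, 0) := by
  constructor
  · intro h
    have h1 : (toC z).re = 0 := by rw [h]; simp
    have h2 : (toC z).im = 0 := by rw [h]; simp
    rw [toC_re'] at h1; rw [toC_im'] at h2
    have : z.1 = 0 := by exact_mod_cast h1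
    have : z.2 = 0 := by exact_mod_cast h2
    ext <;> simp_all
  · intro h; simp [h, toC]

lemma theta_nonneg' (z : V) : 0 ≤ theta z := by
  unfold theta
  split
  · assumption
  · nlinarith [Complex.neg_pi_lt_arg (toC z), Real.pi_pos]

lemma theta_lt_two_pi' (z : V) : theta z < 2 * Real.pi := by
  unfold theta
  split
  · nlinarith [Complex.arg_le_pi (toC z), Real.pi_pos]
  · linarith [not_le.mp (by assumption : ¬ 0 ≤ (toC z).arg)]

lemma cos_theta' (z : V) : Real.cos (theta z) = Real.cos (toC z).arg := by
  unfold theta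
  split
  · rfl
  · rw [Real.cos_add_two_pi]

/-- Closed form for `fIm`. -/
lemma fIm_closed (z : V) : fIm z = Real.sqrt ((nrm z - (z.1 : ℝ)) / 2) := by
  by_cases h0 : toC z = 0
  · have hz : z = (0,0) := toC_eq_zero'.mp h0
    subst hz
    have h0' : toC 0 = 0 := h0
    simp [fIm, nrm, h0', h0]
  · have habs : 0 < nrm z := by
      simpa [nrm] using (norm_pos_iff.mpr h0)
    have hs : Real.sin (theta z / 2) = Real.sqrt ((1 - Real.cos (theta z)) / 2) :=
      Real.sin_half_eq_sqrt (theta_nonneg' z) (theta_lt_two_pi' z).le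
    rw [fIm, hs, cos_theta', Complex.cos_arg h0]
    rw [← Real.sqrt_mul (nrm_nonneg' z)]
    congr 1
    have : ‖toC z‖ = nrm z := rfl
    rw [this, toC_re']
    field_simp

lemma nrm_neg_im (a b : ℤ) : nrm (a, -b) = nrm (a, b) := by
  unfold nrm
  rw [show toC (a, -b) = starRingEnd ℂ (toC (a, b)) by
    simp [toC, Complex.ext_iff]]
  exact Complex.norm_conj _

lemma fIm_neg_im (a b : ℤ) : fIm (a, -b) = fIm (a, b) := by
  rw [fIm_closed, fIm_closed, nrm_neg_im]

lemma cpow_half_re_im {u : ℂ} (hu : u ≠ 0) :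
    (u ^ (1/2 : ℂ)).re = Real.sqrt (‖u‖) * Real.cos (u.arg / 2) ∧
    (u ^ (1/2 : ℂ)).im = Real.sqrt (‖u‖) * Real.sin (u.arg / 2) := by
  rw [Complex.cpow_def_of_ne_zero hu]
  have hre : (Complex.log u * (1/2 : ℂ)).re = Real.log (‖u‖) / 2 := by
    simp [Complex.mul_re, Complex.log_re, Complex.log_im]; ring
  have him : (Complex.log u * (1/2 : ℂ)).im = u.arg / 2 := by
    simp [Complex.mul_im, Complex.log_re, Complex.log_im]; ring
  have hexp : Real.exp (Real.log (‖u‖) / 2) = Real.sqrt (‖u‖) := by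
    have habs : 0 < ‖u‖ := norm_pos_iff.mpr hu
    rw [Real.sqrt_eq_rpow, Real.rpow_def_of_pos habs]; ring_nf
  exact ⟨by rw [Complex.exp_re, hre, him, hexp],
         by rw [Complex.exp_im, hre, him, hexp]⟩

/-- Identity for the principal branch, valid on the closed upper half plane. -/
lemma fIm_eq_branch_pos {z : V} (h : 0 ≤ z.2) : fIm z = ((toC z) ^ (1/2 : ℂ)).im := by
  by_cases h0 : toC z = 0
  · rw [h0, Complex.zero_cpow (by norm_num)]
    have hz : z = (0, 0) := toC_eq_zero'.mp h0
    subst hz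
    have h0' : toC 0 = 0 := h0
    simp [fIm, nrm, h0', h0]
  · rw [(cpow_half_re_im h0).2, fIm]
    have harg : 0 ≤ (toC z).arg := by
      rw [Complex.arg_nonneg_iff, toC_im']
      exact_mod_cast h
    rw [theta, if_pos harg]
    rfl

/-- Identity for the branch `w ↦ I·(-w)^{1/2}`, valid off the nonnegative real axis. -/
lemma fIm_eq_branch_neg {z : V} (h : z.1 < 0 ∨ z.2 ≠ 0) :
    fIm z = (Complex.I * (-toC z) ^ (1/2 : ℂ)).im := by
  have h0 : toC z ≠ 0 := by
    intro hc
    have := toC_eq_zero'.mp hc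
    rw [this] at h
    simp at h
  have h0' : -toC z ≠ 0 := neg_ne_zero.mpr h0
  rw [Complex.mul_im]
  simp only [Complex.I_re, Complex.I_im, zero_mul, one_mul, zero_add]
  rw [(cpow_half_re_im h0').1, norm_neg]
  have hnrm : ‖toC z‖ = nrm z := rfl
  rw [hnrm, fIm]
  rcases lt_trichotomy z.2 0 with hy | hy | hy
  · have him : (toC z).im < 0 := by rw [toC_im']; exact_mod_cast hy
    rw [Complex.arg_neg_eq_arg_add_pi_of_im_neg him]
    have harg : ¬ 0 ≤ (toC z).arg := fun hc =>
      absurd (Complex.arg_nonneg_iff.mp hc) (not_le.2 him)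
    rw [theta, if_neg harg]
    rw [show ((toC z).arg + Real.pi) / 2 = (toC z).arg / 2 + Real.pi / 2 by ring,
      Real.cos_add_pi_div_two,
      show ((toC z).arg + 2 * Real.pi) / 2 = (toC z).arg / 2 + Real.pi by ring,
      Real.sin_add_pi]
  · have hx : z.1 < 0 := by
      rcases h with h | h
      · exact h
      · exact absurd hy h
    have harg : (toC z).arg = Real.pi :=
      Complex.arg_eq_pi_iff.2 ⟨by rw [toC_re']; exact_mod_cast hx,
        by rw [toC_im']; exact_mod_cast hy⟩
    have harg' : (-toC z).arg = 0 := by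
      rw [Complex.arg_eq_zero_iff]
      constructor
      · rw [Complex.neg_re, toC_re']
        have : (z.1 : ℝ) < 0 := by exact_mod_cast hx
        linarith
      · rw [Complex.neg_im, toC_im']
        simp [hy]
    rw [harg', theta, if_pos (by rw [harg]; exact Real.pi_pos.le), harg]
    simp [Real.sin_pi_div_two]
  · have him : 0 < (toC z).im := by rw [toC_im']; exact_mod_cast hy
    rw [Complex.arg_neg_eq_arg_sub_pi_of_im_pos him]
    have harg : 0 ≤ (toC z).arg := Complex.arg_nonneg_iff.mpr him.le
    rw [theta, if_pos harg]
    rw [show ((toC z).arg - Real.pi) / 2 = (toC z).arg / 2 - Real.pi / 2 by ring,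
      Real.cos_sub_pi_div_two]

/-- Core Cauchy-estimate bound for the discrete Laplacian of a holomorphic function. -/
lemma core_estimate (G : ℂ → ℂ) (z₀ : ℂ) (R K : ℝ) (hR : 2 ≤ R)
    (hd : DifferentiableOn ℂ G (closedBall z₀ R))
    (hK : ∀ w ∈ closedBall z₀ R, ‖G w‖ ≤ K) :
    ‖(G (z₀ + 1) + G (z₀ - 1) + G (z₀ + Complex.I) + G (z₀ - Complex.I)) / 4 - G z₀‖
      ≤ 2 * K / R ^ 4 := by
  have hR0 : 0 < R := by linarith
  have hK0 : 0 ≤ K := le_trans (norm_nonneg _) (hK z₀ (mem_closedBall_self hR0.le))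
  set R' : NNReal := R.toNNReal with hR'
  have hcoe : (R' : ℝ) = R := Real.coe_toNNReal R hR0.le
  have hR'pos : 0 < R' := Real.toNNReal_pos.mpr hR0
  set p := cauchyPowerSeries G z₀ R with hp_def
  have hp : HasFPowerSeriesOnBall G p z₀ R' := by
    have hd' : DifferentiableOn ℂ G (closedBall z₀ (R' : ℝ)) := by rwa [hcoe]
    have := DifferentiableOn.hasFPowerSeriesOnBall hd' hR'pos
    rwa [hp_def, ← hcoe]
  have hcoeff : ∀ n, ‖p.coeff n‖ ≤ K / R ^ n := by
    intro n
    have h1 : ‖p n‖ ≤ ((2 * Real.pi)⁻¹ * ∫ θ : ℝ in (0)..2 * Real.pi,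
        ‖G (circleMap z₀ R θ)‖) * |R|⁻¹ ^ n := norm_cauchyPowerSeries_le G z₀ R n
    have hcont : Continuous fun θ : ℝ => ‖G (circleMap z₀ R θ)‖ := by
      apply Continuous.norm
      apply hd.continuousOn.comp_continuous (continuous_circleMap _ _)
      intro θ
      exact sphere_subset_closedBall (circleMap_mem_sphere z₀ hR0.le θ)
    have hint : (∫ θ : ℝ in (0)..2 * Real.pi, ‖G (circleMap z₀ R θ)‖)
        ≤ 2 * Real.pi * K := by
      have := intervalIntegral.integral_mono_on (by positivity : (0:ℝ) ≤ 2 * Real.pi)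
        (hcont.intervalIntegrable _ _)
        (intervalIntegrable_const (c := K) (μ := MeasureTheory.volume))
        (fun θ _ => hK _ (sphere_subset_closedBall (circleMap_mem_sphere z₀ hR0.le θ)))
      simpa using this
    have h2 : ((2 * Real.pi)⁻¹ * ∫ θ : ℝ in (0)..2 * Real.pi,
        ‖G (circleMap z₀ R θ)‖) ≤ K := by
      rw [inv_mul_le_iff₀ (by positivity)]
      linarith [hint]
    calc ‖p.coeff n‖ = ‖p n‖ := by rw [FormalMultilinearSeries.norm_apply_eq_norm_coef]
      _ ≤ _ := h1
      _ ≤ K * |R|⁻¹ ^ n := by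
          apply mul_le_mul_of_nonneg_right h2
          positivity
      _ = K / R ^ n := by
          rw [abs_of_pos hR0, inv_pow, div_eq_mul_inv]
  have hsum : ∀ e : ℂ, ‖e‖ = 1 →
      HasSum (fun n => e ^ n • p.coeff n) (G (z₀ + e)) := by
    intro e he
    have hmem : e ∈ Metric.eball (0 : ℂ) R' := by
      rw [Metric.mem_eball, edist_zero_right]
      have h1' : ‖e‖₊ = 1 := by
        ext; simpa using he
      rw [enorm_eq_nnnorm, h1']
      have hlt : (1 : ℝ) < (R' : ℝ) := by rw [hcoe]; linarith
      exact_mod_cast hlt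
    have := hp.hasSum hmem
    simpa only [FormalMultilinearSeries.apply_eq_pow_smul_coeff] using this
  set T : ℂ := (G (z₀ + 1) + G (z₀ - 1) + G (z₀ + Complex.I) + G (z₀ - Complex.I)) / 4 with hT
  set A : ℕ → ℂ := fun n =>
    (((1 : ℂ) ^ n + (-1 : ℂ) ^ n + Complex.I ^ n + (-Complex.I) ^ n) / 4) * p.coeff n with hA_def
  have h1 := hsum 1 (by simp)
  have h2 := hsum (-1) (by simp)
  have h3 := hsum Complex.I (by simp)
  have h4 := hsum (-Complex.I) (by simp)
  rw [show z₀ + -1 = z₀ - 1 by ring] at h2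
  rw [show z₀ + -Complex.I = z₀ - Complex.I by ring] at h4
  have hA : HasSum A T := by
    have h := (((h1.add h2).add h3).add h4).div_const 4
    have heq : (fun n => ((1:ℂ) ^ n • p.coeff n + (-1:ℂ) ^ n • p.coeff n
        + Complex.I ^ n • p.coeff n + (-Complex.I) ^ n • p.coeff n) / 4) = A := by
      funext n
      simp only [hA_def, smul_eq_mul]
      ring
    rw [← heq]
    exact h
  have hcz : p.coeff 0 = G z₀ := by
    show p 0 1 = G z₀
    exact hp.coeff_zero 1
  have a0 : A 0 = G z₀ := by
    simp only [hA_def, pow_zero]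
    rw [← hcz]
    ring
  have a1 : A 1 = 0 := by
    simp only [hA_def, pow_one]
    ring
  have a2 : A 2 = 0 := by
    simp only [hA_def]
    rw [show ((1:ℂ) ^ 2 + (-1) ^ 2 + Complex.I ^ 2 + (-Complex.I) ^ 2) / 4 * p.coeff 2
      = (2 + 2 * Complex.I ^ 2) / 4 * p.coeff 2 from by ring, Complex.I_sq]
    ring
  have a3 : A 3 = 0 := by
    simp only [hA_def]
    ring
  have hsum4 : (∑ i ∈ Finset.range 4, A i) = G z₀ := by
    rw [Finset.sum_range_succ, Finset.sum_range_succ, Finset.sum_range_succ,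
      Finset.sum_range_one, a0, a1, a2, a3]
    ring
  have h5 : HasSum (fun n => A (n + 4)) (T - G z₀) := by
    apply (hasSum_nat_add_iff (f := A) 4).mpr
    rw [hsum4, sub_add_cancel]
    exact hA
  have hpow : ∀ n : ℕ, (R ^ n)⁻¹ ≤ (1/2 : ℝ) ^ n := by
    intro n
    rw [← inv_pow]
    apply pow_le_pow_left₀ (by positivity)
    have := inv_anti₀ (by norm_num : (0:ℝ) < 2) hR
    linarith
  have hbound : ∀ n : ℕ, ‖A (n + 4)‖ ≤ K / R ^ 4 * (1 / 2) ^ n := by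
    intro n
    have hfac : ‖(((1 : ℂ) ^ (n+4) + (-1 : ℂ) ^ (n+4) + Complex.I ^ (n+4)
        + (-Complex.I) ^ (n+4)) / 4)‖ ≤ 1 := by
      rw [norm_div]
      have h4n : ‖(4 : ℂ)‖ = 4 := by norm_num
      rw [h4n]
      have b1 : ‖(1 : ℂ) ^ (n+4)‖ ≤ 1 := by simp
      have b2 : ‖(-1 : ℂ) ^ (n+4)‖ ≤ 1 := by simp
      have b3 : ‖Complex.I ^ (n+4)‖ ≤ 1 := by rw [norm_pow]; simp
      have b4 : ‖(-Complex.I) ^ (n+4)‖ ≤ 1 := by rw [norm_pow]; simp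
      have t1 := norm_add_le ((1:ℂ)^(n+4) + (-1:ℂ)^(n+4) + Complex.I^(n+4)) ((-Complex.I)^(n+4))
      have t2 := norm_add_le ((1:ℂ)^(n+4) + (-1:ℂ)^(n+4)) (Complex.I^(n+4))
      have t3 := norm_add_le ((1:ℂ)^(n+4)) ((-1:ℂ)^(n+4))
      rw [div_le_one (by norm_num)]
      linarith
    calc ‖A (n + 4)‖ ≤ 1 * ‖p.coeff (n + 4)‖ := by
          rw [hA_def]
          simp only [norm_mul]
          exact mul_le_mul_of_nonneg_right hfac (norm_nonneg _)
      _ = ‖p.coeff (n + 4)‖ := one_mul _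
      _ ≤ K / R ^ (n + 4) := hcoeff (n + 4)
      _ ≤ K / R ^ 4 * (1 / 2) ^ n := by
          rw [pow_add, show K / (R ^ n * R ^ 4) = K / R ^ 4 * (R ^ n)⁻¹ from by ring]
          exact mul_le_mul_of_nonneg_left (hpow n) (by positivity)
  have hgs : Summable (fun n : ℕ => K / R ^ 4 * (1/2 : ℝ) ^ n) :=
    (summable_geometric_of_lt_one (by norm_num) (by norm_num)).mul_left _
  have hAsum : Summable (fun n => ‖A (n + 4)‖) :=
    Summable.of_nonneg_of_le (fun n => norm_nonneg _) hbound hgs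
  have hnorm : ‖T - G z₀‖ ≤ ∑' n, ‖A (n + 4)‖ := by
    rw [← h5.tsum_eq]
    exact norm_tsum_le_tsum_norm hAsum
  have htail : (∑' n, ‖A (n + 4)‖) ≤ ∑' n : ℕ, K / R ^ 4 * (1/2 : ℝ) ^ n :=
    Summable.tsum_le_tsum hbound hAsum hgs
  have hgeom : (∑' n : ℕ, K / R ^ 4 * (1/2 : ℝ) ^ n) = K / R ^ 4 * 2 := by
    rw [tsum_mul_left, tsum_geometric_of_lt_one (by norm_num) (by norm_num)]
    norm_num
  rw [hgeom] at htail
  have hfin := le_trans hnorm htail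
  rw [show 2 * K / R ^ 4 = K / R ^ 4 * 2 from by ring]
  exact hfin

lemma div4_im (u : ℂ) : (u / 4).im = u.im / 4 := by
  rw [Complex.div_im]
  simp [Complex.normSq_apply]
  ring

lemma toC_nbr1 (z : V) : toC (z.1 + 1, z.2) = toC z + 1 := by
  unfold toC; push_cast; ring
lemma toC_nbr2 (z : V) : toC (z.1 - 1, z.2) = toC z - 1 := by
  unfold toC; push_cast; ring
lemma toC_nbr3 (z : V) : toC (z.1, z.2 + 1) = toC z + Complex.I := by
  unfold toC; push_cast; ring
lemma toC_nbr4 (z : V) : toC (z.1, z.2 - 1) = toC z - Complex.I := by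
  unfold toC; push_cast; ring

/-- The branch-independent main bound. -/
lemma branch_bound (z : V) (h8 : 8 ≤ nrm z) (G : ℂ → ℂ)
    (hd : DifferentiableOn ℂ G (closedBall (toC z) (nrm z / 2)))
    (hK : ∀ w ∈ closedBall (toC z) (nrm z / 2), ‖G w‖ ≤ Real.sqrt (2 * nrm z))
    (hpt : ∀ p : V, ‖toC p - toC z‖ ≤ 1 → fIm p = (G (toC p)).im) :
    |Lap fIm z| ≤ 64 * nrm z ^ (-(7 / 2) : ℝ) := by
  have h0 : (0:ℝ) < nrm z := by linarith
  have core := core_estimate G (toC z) (nrm z / 2) (Real.sqrt (2 * nrm z))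
    (by linarith) hd hK
  have d1 : ‖toC (z.1 + 1, z.2) - toC z‖ ≤ 1 := by
    rw [toC_nbr1]; simp
  have d2 : ‖toC (z.1 - 1, z.2) - toC z‖ ≤ 1 := by
    rw [toC_nbr2]; simp
  have d3 : ‖toC (z.1, z.2 + 1) - toC z‖ ≤ 1 := by
    rw [toC_nbr3]; simp
  have d4 : ‖toC (z.1, z.2 - 1) - toC z‖ ≤ 1 := by
    rw [toC_nbr4]; simp
  have hLap : Lap fIm z = ((G (toC z + 1) + G (toC z - 1) + G (toC z + Complex.I)
      + G (toC z - Complex.I)) / 4 - G (toC z)).im := by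
    rw [Lap]
    simp only [nbrs, List.map_cons, List.map_nil, List.sum_cons, List.sum_nil, add_zero]
    rw [hpt _ d1, hpt _ d2, hpt _ d3, hpt _ d4, hpt z (by simp),
      toC_nbr1, toC_nbr2, toC_nbr3, toC_nbr4]
    rw [Complex.sub_im, div4_im]
    simp only [Complex.add_im]
    ring
  rw [hLap]
  have habs : |((G (toC z + 1) + G (toC z - 1) + G (toC z + Complex.I)
      + G (toC z - Complex.I)) / 4 - G (toC z)).im|
      ≤ ‖(G (toC z + 1) + G (toC z - 1) + G (toC z + Complex.I)
      + G (toC z - Complex.I)) / 4 - G (toC z)‖ := Complex.abs_im_le_norm _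
  have key : 2 * Real.sqrt (2 * nrm z) / (nrm z / 2) ^ 4 ≤ 64 * nrm z ^ (-(7 / 2) : ℝ) := by
    have hrw : nrm z ^ (-(7 / 2) : ℝ) = Real.sqrt (nrm z) / nrm z ^ 4 := by
      rw [show (-(7 / 2) : ℝ) = 1/2 - 4 from by norm_num, Real.rpow_sub h0,
        Real.sqrt_eq_rpow, show ((4:ℝ) : ℝ) = ((4:ℕ) : ℝ) from by norm_num,
        Real.rpow_natCast]
    have hsplit : Real.sqrt (2 * nrm z) = Real.sqrt 2 * Real.sqrt (nrm z) :=
      Real.sqrt_mul (by norm_num) _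
    have hs2 : Real.sqrt 2 ≤ 2 := by
      nlinarith [Real.sq_sqrt (show (0:ℝ) ≤ 2 by norm_num), Real.sqrt_nonneg 2]
    have hL : 2 * (Real.sqrt 2 * Real.sqrt (nrm z)) / (nrm z / 2) ^ 4
        = (32 * Real.sqrt 2) * (Real.sqrt (nrm z) / nrm z ^ 4) := by
      field_simp
      ring
    rw [hrw, hsplit, hL]
    apply mul_le_mul_of_nonneg_right _ (by positivity)
    linarith
  calc |((G (toC z + 1) + G (toC z - 1) + G (toC z + Complex.I)
      + G (toC z - Complex.I)) / 4 - G (toC z)).im|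
      ≤ 2 * Real.sqrt (2 * nrm z) / (nrm z / 2) ^ 4 := le_trans habs core
    _ ≤ 64 * nrm z ^ (-(7 / 2) : ℝ) := key

lemma nrm_sq (z : V) : nrm z ^ 2 = (z.1 : ℝ) ^ 2 + (z.2 : ℝ) ^ 2 := by
  rw [nrm, Complex.sq_norm, Complex.normSq_apply, toC_re', toC_im']
  ring

lemma abs_mem_ball_le {z : V} {w : ℂ} (hw : w ∈ closedBall (toC z) (nrm z / 2)) :
    ‖w‖ ≤ 2 * nrm z := by
  have hd : ‖w - toC z‖ ≤ nrm z / 2 := by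
    rw [← Complex.dist_eq]
    exact mem_closedBall.mp hw
  have : ‖w‖ ≤ ‖toC z‖ + ‖w - toC z‖ := by
    calc ‖w‖ = ‖toC z + (w - toC z)‖ := by ring_nf
      _ ≤ _ := norm_add_le _ _
  have hn : ‖toC z‖ = nrm z := rfl
  rw [hn] at this
  linarith [nrm_nonneg' z]

/-- The main bound for points in the closed upper half plane. -/
lemma aux_upper (z : V) (h8 : 8 ≤ nrm z) (hy : 0 ≤ z.2) (hz : z ∉ Zplus) :
    |Lap fIm z| ≤ 64 * nrm z ^ (-(7 / 2) : ℝ) := by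
  have h0 : (0:ℝ) < nrm z := by linarith
  by_cases hx : 0 ≤ z.1
  · -- right half: principal branch
    have hy1 : 1 ≤ z.2 := by
      rcases lt_or_ge z.2 1 with h | h
      · exfalso
        have : z.2 = 0 := le_antisymm (by omega) hy
        exact hz ⟨hx, this⟩
      · exact h
    have hslit : ∀ w ∈ closedBall (toC z) (nrm z / 2), w ∈ Complex.slitPlane := by
      intro w hw
      rw [Complex.mem_slitPlane_iff]
      by_contra hcon
      push_neg at hcon
      obtain ⟨hre, him⟩ := hcon
      have hd' : ‖w - toC z‖ ≤ nrm z / 2 := by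
        rw [← Complex.dist_eq]; exact mem_closedBall.mp hw
      have hsq : (‖w - toC z‖) ^ 2
          = (w.re - (z.1:ℝ)) ^ 2 + (w.im - (z.2:ℝ)) ^ 2 := by
        rw [Complex.sq_norm, Complex.normSq_apply, Complex.sub_re, Complex.sub_im,
          toC_re', toC_im']
        ring
      have hn2 := nrm_sq z
      have hxR : (0:ℝ) ≤ (z.1:ℝ) := by exact_mod_cast hx
      have hprod : 0 ≤ (-w.re) * (2 * (z.1:ℝ) - w.re) := by
        apply mul_nonneg <;> nlinarith
      have hims : (w.im - (z.2:ℝ)) ^ 2 = (z.2:ℝ) ^ 2 := by rw [him]; ring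
      rw [hims] at hsq
      nlinarith [mul_self_le_mul_self (norm_nonneg (w - toC z)) hd',
        mul_pos h0 h0]
    apply branch_bound z h8 (fun w => w ^ (1/2 : ℂ))
    · exact DifferentiableOn.cpow differentiableOn_id (differentiableOn_const _)
        (fun w hw => hslit w hw)
    · intro w hw
      rw [show (1/2 : ℂ) = ((1/2 : ℝ) : ℂ) from by norm_num,
        Complex.norm_cpow_real, ← Real.sqrt_eq_rpow]
      exact Real.sqrt_le_sqrt (abs_mem_ball_le hw)
    · intro p hp
      apply fIm_eq_branch_pos
      have him := Complex.abs_im_le_norm (toC p - toC z)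
      rw [Complex.sub_im, toC_im', toC_im'] at him
      have : |(p.2 : ℝ) - (z.2 : ℝ)| ≤ 1 := le_trans him hp
      have h1 : (z.2 : ℝ) - 1 ≤ (p.2 : ℝ) := by
        rcases abs_le.mp this with ⟨hl, hr⟩
        linarith
      have h2 : (1 : ℝ) ≤ (z.2 : ℝ) := by exact_mod_cast hy1
      have : (0:ℝ) ≤ (p.2 : ℝ) := by linarith
      exact_mod_cast this
  · -- left half: branch I·(-w)^{1/2}
    push_neg at hx
    have hx1 : z.1 ≤ -1 := by omega
    have hslit : ∀ w ∈ closedBall (toC z) (nrm z / 2), -w ∈ Complex.slitPlane := by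
      intro w hw
      rw [Complex.mem_slitPlane_iff]
      by_contra hcon
      push_neg at hcon
      obtain ⟨hre, him⟩ := hcon
      rw [Complex.neg_re] at hre
      rw [Complex.neg_im, neg_eq_zero] at him
      have hd' : ‖w - toC z‖ ≤ nrm z / 2 := by
        rw [← Complex.dist_eq]; exact mem_closedBall.mp hw
      have hsq : (‖w - toC z‖) ^ 2
          = (w.re - (z.1:ℝ)) ^ 2 + (w.im - (z.2:ℝ)) ^ 2 := by
        rw [Complex.sq_norm, Complex.normSq_apply, Complex.sub_re, Complex.sub_im,
          toC_re', toC_im']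
        ring
      have hn2 := nrm_sq z
      have hxR : ((z.1:ℝ)) ≤ 0 := by
        have : (z.1 : ℝ) ≤ -1 := by exact_mod_cast hx1
        linarith
      have hwre : (0:ℝ) ≤ w.re := by linarith
      have hprod : 0 ≤ w.re * (w.re - 2 * (z.1:ℝ)) := by
        apply mul_nonneg hwre
        nlinarith
      have hims : (w.im - (z.2:ℝ)) ^ 2 = (z.2:ℝ) ^ 2 := by rw [him]; ring
      rw [hims] at hsq
      nlinarith [mul_self_le_mul_self (norm_nonneg (w - toC z)) hd',
        mul_pos h0 h0]
    apply branch_bound z h8 (fun w => Complex.I * (-w) ^ (1/2 : ℂ))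
    · apply DifferentiableOn.const_mul
      exact DifferentiableOn.cpow (differentiableOn_id.neg) (differentiableOn_const _)
        (fun w hw => hslit w hw)
    · intro w hw
      rw [norm_mul, Complex.norm_I, one_mul,
        show (1/2 : ℂ) = ((1/2 : ℝ) : ℂ) from by norm_num,
        Complex.norm_cpow_real, ← Real.sqrt_eq_rpow, norm_neg]
      exact Real.sqrt_le_sqrt (abs_mem_ball_le hw)
    · intro p hp
      apply fIm_eq_branch_neg
      have hre := Complex.abs_re_le_norm (toC p - toC z)
      rw [Complex.sub_re, toC_re', toC_re'] at hre
      have habs1 : |(p.1 : ℝ) - (z.1 : ℝ)| ≤ 1 := le_trans hre hp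
      have hz1R : (z.1 : ℝ) ≤ -1 := by exact_mod_cast hx1
      have hp1 : (p.1 : ℝ) ≤ 0 := by
        rcases abs_le.mp habs1 with ⟨hl, hr⟩
        linarith
      have hp1' : p.1 ≤ 0 := by exact_mod_cast hp1
      rcases lt_or_eq_of_le hp1' with h | h
      · exact Or.inl h
      · right
        intro hcon
        have hzero : toC p = 0 := by
          apply toC_eq_zero'.mpr
          ext <;> simp [h, hcon]
        rw [hzero, zero_sub, norm_neg] at hp
        have : ‖toC z‖ = nrm z := rfl
        rw [this] at hp
        linarith

lemma Lap_fIm_conj (z : V) : Lap fIm (z.1, -z.2) = Lap fIm z := by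
  rw [Lap, Lap]
  simp only [nbrs, List.map_cons, List.map_nil, List.sum_cons, List.sum_nil, add_zero]
  have e1 : fIm (z.1 + 1, -z.2) = fIm (z.1 + 1, z.2) := fIm_neg_im _ _
  have e2 : fIm (z.1 - 1, -z.2) = fIm (z.1 - 1, z.2) := fIm_neg_im _ _
  have e3 : fIm (z.1, -z.2 + 1) = fIm (z.1, z.2 - 1) := by
    rw [show -z.2 + 1 = -(z.2 - 1) by ring]
    exact fIm_neg_im _ _
  have e4 : fIm (z.1, -z.2 - 1) = fIm (z.1, z.2 + 1) := by
    rw [show -z.2 - 1 = -(z.2 + 1) by ring]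
    exact fIm_neg_im _ _
  have e5 : fIm (z.1, -z.2) = fIm (z.1, z.2) := fIm_neg_im _ _
  have e6 : (z.1, z.2) = z := rfl
  rw [e1, e2, e3, e4, e5, e6]
  ring

lemma abs_fIm_le (p : V) : |fIm p| ≤ Real.sqrt (nrm p) := by
  rw [fIm, abs_mul, abs_of_nonneg (Real.sqrt_nonneg _)]
  calc Real.sqrt (nrm p) * |Real.sin (theta p / 2)| ≤ Real.sqrt (nrm p) * 1 :=
      mul_le_mul_of_nonneg_left (Real.abs_sin_le_one _) (Real.sqrt_nonneg _)
    _ = Real.sqrt (nrm p) := mul_one _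

lemma one_le_nrm {z : V} (h : z ≠ ((0 : ℤ), (0 : ℤ))) : 1 ≤ nrm z := by
  have hn2 := nrm_sq z
  have h1 : (1:ℝ) ≤ (z.1 : ℝ) ^ 2 + (z.2 : ℝ) ^ 2 := by
    have : z.1 ≠ 0 ∨ z.2 ≠ 0 := by
      by_contra hc
      push_neg at hc
      exact h (by ext <;> simp [hc.1, hc.2])
    have hint : (1:ℤ) ≤ z.1 ^ 2 + z.2 ^ 2 := by
      rcases this with h' | h'
      · nlinarith [sq_nonneg z.2, Int.one_le_abs (by simpa using h' : z.1 ≠ 0), sq_abs z.1,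
          abs_nonneg z.1]
      · nlinarith [sq_nonneg z.1, Int.one_le_abs (by simpa using h' : z.2 ≠ 0), sq_abs z.2,
          abs_nonneg z.2]
    exact_mod_cast hint
  nlinarith [nrm_nonneg' z]

end Stmt11Aux

/-- There exists `c < ∞` such that for all `z ∈ ℤ² ∖ ℤ₊`:
`|L f(z)| ≤ c |z|^{-7/2}`, where `f(z) = Im √z` and `L` is the discrete Laplacian. -/
theorem stmt11_laplacian_fIm_bound :
    ∃ c : ℝ, ∀ z : V, z ∉ Zplus → |Lap fIm z| ≤ c * nrm z ^ (-(7 / 2) : ℝ) := by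
  refine ⟨32768, fun z hz => ?_⟩
  by_cases h8 : 8 ≤ nrm z
  · -- far from the origin: analytic estimate
    have hstep : |Lap fIm z| ≤ 64 * nrm z ^ (-(7 / 2) : ℝ) := by
      rcases le_or_gt 0 z.2 with hy | hy
      · exact aux_upper z h8 hy hz
      · -- reflect to the upper half plane
        have hz2 : (0:ℤ) ≤ -z.2 := by omega
        have hrefl : Lap fIm z = Lap fIm (z.1, -z.2) := (Lap_fIm_conj z).symm
        have hnrm : nrm (z.1, -z.2) = nrm z := nrm_neg_im _ _
        have hzz : (z.1, -z.2) ∉ Zplus := by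
          intro hc
          have : -z.2 = 0 := hc.2
          omega
        have := aux_upper (z.1, -z.2) (by rw [hnrm]; exact h8) hz2 hzz
        rw [hrefl, ← hnrm]
        exact this
    have hr : (0:ℝ) ≤ nrm z ^ (-(7 / 2) : ℝ) := Real.rpow_nonneg (nrm_nonneg' z) _
    calc |Lap fIm z| ≤ 64 * nrm z ^ (-(7 / 2) : ℝ) := hstep
      _ ≤ 32768 * nrm z ^ (-(7 / 2) : ℝ) :=
        mul_le_mul_of_nonneg_right (by norm_num) hr
  · -- close to the origin: crude bound
    push_neg at h8
    have hne : z ≠ ((0:ℤ), (0:ℤ)) := by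
      intro hc
      exact hz (by rw [hc]; exact ⟨le_refl 0, rfl⟩)
    have h1 : 1 ≤ nrm z := one_le_nrm hne
    -- each relevant point has norm at most 9
    have hbnd : ∀ p : V, ‖toC p - toC z‖ ≤ 1 → |fIm p| ≤ 3 := by
      intro p hp
      have hnp : nrm p ≤ 9 := by
        have : ‖toC p‖ ≤ ‖toC z‖ + ‖toC p - toC z‖ := by
          calc ‖toC p‖ = ‖toC z + (toC p - toC z)‖ := by ring_nf
            _ ≤ _ := norm_add_le _ _
        have hzn : ‖toC z‖ = nrm z := rfl
        have hpn : ‖toC p‖ = nrm p := rfl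
        rw [hzn, hpn] at this
        linarith
      calc |fIm p| ≤ Real.sqrt (nrm p) := abs_fIm_le p
        _ ≤ Real.sqrt 9 := Real.sqrt_le_sqrt hnp
        _ = 3 := by
            rw [show (9:ℝ) = 3 ^ 2 by norm_num, Real.sqrt_sq (by norm_num)]
    have d1 : ‖toC (z.1 + 1, z.2) - toC z‖ ≤ 1 := by rw [toC_nbr1]; simp
    have d2 : ‖toC (z.1 - 1, z.2) - toC z‖ ≤ 1 := by rw [toC_nbr2]; simp
    have d3 : ‖toC (z.1, z.2 + 1) - toC z‖ ≤ 1 := by rw [toC_nbr3]; simp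
    have d4 : ‖toC (z.1, z.2 - 1) - toC z‖ ≤ 1 := by rw [toC_nbr4]; simp
    have b1 := abs_le.mp (hbnd _ d1)
    have b2 := abs_le.mp (hbnd _ d2)
    have b3 := abs_le.mp (hbnd _ d3)
    have b4 := abs_le.mp (hbnd _ d4)
    have b0 := abs_le.mp (hbnd z (by simp))
    have hLap6 : |Lap fIm z| ≤ 6 := by
      rw [Lap]
      simp only [nbrs, List.map_cons, List.map_nil, List.sum_cons, List.sum_nil, add_zero]
      rw [abs_le]
      constructor
      · nlinarith [b1.1, b2.1, b3.1, b4.1, b0.2]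
      · nlinarith [b1.2, b2.2, b3.2, b4.2, b0.1]
    -- and the right-hand side is at least 8
    have hup : nrm z ^ ((7:ℝ) / 2) ≤ 4096 := by
      calc nrm z ^ ((7:ℝ) / 2) ≤ (8:ℝ) ^ ((7:ℝ) / 2) :=
          Real.rpow_le_rpow (nrm_nonneg' z) h8.le (by norm_num)
        _ ≤ (8:ℝ) ^ ((4:ℕ) : ℝ) :=
          Real.rpow_le_rpow_of_exponent_le (by norm_num) (by norm_num)
        _ = 4096 := by rw [Real.rpow_natCast]; norm_num
    have hpos : (0:ℝ) < nrm z ^ ((7:ℝ) / 2) := Real.rpow_pos_of_pos (by linarith) _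
    have hinv : (4096:ℝ)⁻¹ ≤ (nrm z ^ ((7:ℝ) / 2))⁻¹ := inv_anti₀ hpos hup
    have hneg : nrm z ^ (-(7 / 2) : ℝ) = (nrm z ^ ((7:ℝ) / 2))⁻¹ := by
      rw [← Real.rpow_neg (nrm_nonneg' z)]
    have : (6:ℝ) ≤ 32768 * nrm z ^ (-(7 / 2) : ℝ) := by
      rw [hneg]
      nlinarith [hinv]
    linarith [hLap6]

end LERW
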